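/- Let r be an odd prime power, let q = r², let F_q be the finite field with q elements, and let θ ∈ F_q be a non-square. Then for y ∈ F_q, the element 1 + θ·y² lies in the set {α ∈ F_q : α^r = α, α ≠ 0} of nonzero elements of the subfield of order r if and only if y = 0. (Geometrically: the line x = 1 in AG(2,q) meets the union of the conics x² + θy² = α, α ∈ F_r^*, in exactly one point, so that w₀ = 1.) -/

import Mathlib

/-- Let `q = r²` with `r` an odd prime power, let `F` be the field with `q` elements,
and let `θ ∈ F` be a non-square.  Then `1 + θ·y²` is a nonzero element of the
subfield of order `r` (i.e. `(1 + θy²)^r = 1 + θy²` and `1 + θy² ≠ 0`) if and only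
if `y = 0`.  (Geometrically: the line `x = 1` of `AG(2,q)` meets the union of the
conics `x² + θy² = α`, `α ∈ F_r^*`, in exactly one point, so `w₀ = 1`.) -/
theorem line_meets_conics_once (p n r q : ℕ) (hp : p.Prime) (hodd : Odd p)
    (hn : 1 ≤ n) (hr : r = p ^ n) (hq : q = r ^ 2)
    (F : Type*) [Field F] [Fintype F] (hF : Fintype.card F = q)
    (θ : F) (hθ : ¬ ∃ x : F, x ^ 2 = θ) (y : F) :
    ((1 + θ * y ^ 2) ^ r = 1 + θ * y ^ 2 ∧ 1 + θ * y ^ 2 ≠ 0) ↔ y = 0 := by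
  have hp2 : p ≠ 2 := by
    rintro rfl
    exact (Nat.not_odd_iff_even.mpr (by norm_num)) hodd
  -- char F = p
  haveI : CharP F (ringChar F) := ringChar.charP F
  obtain ⟨k, hprime, hcard⟩ := FiniteField.card F (ringChar F)
  have hdvd : ringChar F ∣ p ^ (2 * n) := by
    refine Dvd.intro (ringChar F ^ ((k : ℕ) - 1)) ?_
    rw [← pow_succ']
    have h1 : (k : ℕ) - 1 + 1 = (k : ℕ) := Nat.succ_pred_eq_of_pos k.pos
    rw [h1, ← hcard, hF, hq, hr, ← pow_mul, mul_comm]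
  have hring : ringChar F = p :=
    (Nat.prime_dvd_prime_iff_eq hprime hp).mp (hprime.dvd_of_dvd_pow hdvd)
  haveI : CharP F p := hring ▸ ringChar.charP F
  haveI := Fact.mk hp
  haveI : ExpChar F p := ExpChar.prime hp
  have hrodd : Odd r := hr ▸ hodd.pow
  constructor
  · rintro ⟨h1, h2⟩
    by_contra hy
    have hθ0 : θ ≠ 0 := fun h => hθ ⟨0, by simp [h]⟩
    have ha0 : θ * y ^ 2 ≠ 0 := mul_ne_zero hθ0 (pow_ne_zero _ hy)
    have hfrob : (1 + θ * y ^ 2) ^ r = 1 + (θ * y ^ 2) ^ r := by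
      rw [hr, add_pow_char_pow, one_pow]
    have har : (θ * y ^ 2) ^ r = θ * y ^ 2 := add_left_cancel (hfrob ▸ h1)
    have hr1 : 1 ≤ r := hr ▸ Nat.one_le_pow _ _ hp.pos
    have hpow1 : (θ * y ^ 2) ^ (r - 1) = 1 := by
      have h3 : (θ * y ^ 2) ^ (r - 1) * (θ * y ^ 2) = 1 * (θ * y ^ 2) := by
        rw [← pow_succ, Nat.sub_add_cancel hr1, har, one_mul]
      exact mul_right_cancel₀ ha0 h3
    have hchar2 : ringChar F ≠ 2 := hring ▸ hp2
    have hcard2 : Fintype.card F / 2 = (r - 1) * ((r + 1) / 2) := by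
      obtain ⟨j, hj⟩ := hrodd
      rw [hF, hq]
      subst hj
      have e1 : (2 * j + 1 + 1) / 2 = j + 1 := by omega
      have e2 : 2 * j + 1 - 1 = 2 * j := by omega
      rw [e1, e2]
      have e3 : (2 * j + 1) ^ 2 = 2 * (2 * j * (j + 1)) + 1 := by ring
      omega
    have hsq : IsSquare (θ * y ^ 2) := by
      rw [FiniteField.isSquare_iff hchar2 ha0, hcard2, pow_mul, hpow1, one_pow]
    obtain ⟨s, hs⟩ := hsq
    apply hθ
    refine ⟨s / y, ?_⟩
    field_simp
    rw [sq]
    exact hs.symm.trans (mul_comm _ _)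
  · rintro rfl
    simp
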